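/- For all ideals A and B of R and every e ∈ ℕ, the Frobenius power commutes with intersection: (A ∩ B)^{[p^e]} = A^{[p^e]} ∩ B^{[p^e]}. -/

import Mathlib

open Filter

/-- The `q`-th Frobenius power of an ideal `J`:
the ideal generated by the `q`-th powers of the elements of `J`. -/
def frobeniusPower {R : Type*} [CommSemiring R] (J : Ideal R) (q : ℕ) : Ideal R :=
  Ideal.span ((· ^ q) '' (J : Set R))

open MvPolynomial
set_option linter.unusedSectionVars false

section
variable {p : ℕ} [Fact p.Prime] {K : Type*} [Field K] [Fintype K] [CharP K p]
  [ExpChar K p] [PerfectRing K p] {m e : ℕ}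

noncomputable def psinv (K : Type*) [Field K] (p e : ℕ) [ExpChar K p] [PerfectRing K p] : K ≃+* K :=
  (iterateFrobeniusEquiv K p e).symm

lemma psinv_pow (x : K) : (psinv K p e x) ^ p ^ e = x := by
  have := (iterateFrobeniusEquiv K p e).apply_symm_apply x
  rwa [iterateFrobeniusEquiv_def] at this

lemma psinv_pow' (x : K) : psinv K p e (x ^ p ^ e) = x := by
  have := (iterateFrobeniusEquiv K p e).symm_apply_apply x
  rwa [iterateFrobeniusEquiv_def] at this

noncomputable def divq (p e : ℕ) {m : ℕ} (u : Fin m →₀ ℕ) : Fin m →₀ ℕ :=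
  u.mapRange (· / p ^ e) (Nat.zero_div _)
noncomputable def modq (p e : ℕ) {m : ℕ} (u : Fin m →₀ ℕ) : Fin m →₀ ℕ :=
  u.mapRange (· % p ^ e) (Nat.zero_mod _)

@[simp] lemma divq_apply (u : Fin m →₀ ℕ) (i : Fin m) : divq p e u i = u i / p ^ e := rfl
@[simp] lemma modq_apply (u : Fin m →₀ ℕ) (i : Fin m) : modq p e u i = u i % p ^ e := rfl

noncomputable def comp (p e : ℕ) [ExpChar K p] [PerfectRing K p] (v : Fin m →₀ ℕ)
    (f : MvPolynomial (Fin m) K) : MvPolynomial (Fin m) K :=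
  Finsupp.sum (AddMonoidAlgebra.coeff f) fun u c => monomial (divq p e u) (if modq p e u = v then psinv K p e c else 0)

lemma comp_zero (v : Fin m →₀ ℕ) : comp p e v (0 : MvPolynomial (Fin m) K) = 0 := by
  simp [comp]

lemma comp_add (v : Fin m →₀ ℕ) (f g : MvPolynomial (Fin m) K) :
    comp p e v (f + g) = comp p e v f + comp p e v g := by
  classical
  unfold comp
  rw [AddMonoidAlgebra.coeff_add, Finsupp.sum_add_index]
  · intro u _; simp
  · intro u _ c d; split <;> simp

lemma coeff_comp (v : Fin m →₀ ℕ) (hv : ∀ i, v i < p ^ e) (f : MvPolynomial (Fin m) K)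
    (n : Fin m →₀ ℕ) :
    coeff n (comp p e v f) = psinv K p e (coeff (p ^ e • n + v) f) := by
  classical
  have hq : 0 < p ^ e := pow_pos (Fact.out (p := p.Prime)).pos e
  unfold comp
  rw [Finsupp.sum, coeff_sum]
  rw [Finset.sum_eq_single (p ^ e • n + v)]
  · rw [coeff_monomial]
    have h1 : divq p e (p ^ e • n + v) = n := by
      ext i
      simp only [divq_apply, Finsupp.add_apply, Finsupp.smul_apply, smul_eq_mul]
      rw [Nat.mul_add_div hq, Nat.div_eq_of_lt (hv i), add_zero]
    have h2 : modq p e (p ^ e • n + v) = v := by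
      ext i
      simp only [modq_apply, Finsupp.add_apply, Finsupp.smul_apply, smul_eq_mul]
      rw [Nat.mul_add_mod, Nat.mod_eq_of_lt (hv i)]
    rw [h1, h2, if_pos rfl, if_pos rfl]
    rfl
  · intro u hu hne
    rw [coeff_monomial]
    split_ifs with h1 h2
    · exfalso
      apply hne
      ext i
      have := congrArg (fun w => w i) h1
      have h2' := congrArg (fun w => w i) h2
      simp only [divq_apply, modq_apply] at this h2'
      simp only [Finsupp.add_apply, Finsupp.smul_apply, smul_eq_mul]
      rw [← this, ← h2']
      exact (Nat.div_add_mod (u i) (p ^ e)).symm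
    · rfl
    · rfl
  · intro h
    rw [Finsupp.notMem_support_iff] at h
    rw [h]
    simp
variable (f g : MvPolynomial (Fin m) K)

lemma coeff_pow_q (u : Fin m →₀ ℕ) :
    coeff u (f ^ p ^ e) =
      if modq p e u = 0 then (coeff (divq p e u) f) ^ p ^ e else 0 := by
  classical
  have hq : 0 < p ^ e := pow_pos (Fact.out (p := p.Prime)).pos e
  induction f using MvPolynomial.induction_on' with
  | monomial s c =>
    rw [monomial_pow, coeff_monomial, coeff_monomial]
    have hiff : p ^ e • s = u ↔ (modq p e u = 0 ∧ s = divq p e u) := by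
      constructor
      · rintro rfl
        constructor
        · ext i
          simp [Nat.mul_mod_right]
        · ext i
          simp [Nat.mul_div_cancel_left _ hq]
      · rintro ⟨h1, h2⟩
        ext i
        have h1' := congrArg (fun w => w i) h1
        simp only [modq_apply, Finsupp.coe_zero, Pi.zero_apply] at h1'
        subst h2
        simp only [Finsupp.smul_apply, divq_apply, smul_eq_mul]
        exact Nat.mul_div_cancel' (Nat.dvd_of_mod_eq_zero h1')
    simp only [hiff]
    by_cases hA : modq p e u = 0 <;> by_cases hB : s = divq p e u <;>
      simp [hA, hB, zero_pow hq.ne']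
  | add f g hf hg =>
    rw [add_pow_char_pow, coeff_add, hf, hg, coeff_add, add_pow_char_pow]
    split_ifs <;> simp

lemma comp_pow_mul (v : Fin m →₀ ℕ) (hv : ∀ i, v i < p ^ e) (g f : MvPolynomial (Fin m) K) :
    comp p e v (g ^ p ^ e * f) = g * comp p e v f := by
  classical
  have hq : 0 < p ^ e := pow_pos (Fact.out (p := p.Prime)).pos e
  induction g using MvPolynomial.induction_on' with
  | monomial s c =>
    ext n
    rw [coeff_comp v hv, monomial_pow, coeff_monomial_mul', coeff_monomial_mul',
      coeff_comp v hv]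
    have hle : p ^ e • s ≤ p ^ e • n + v ↔ s ≤ n := by
      rw [Finsupp.le_def, Finsupp.le_def]
      constructor
      · intro h i
        have := h i
        simp only [Finsupp.smul_apply, Finsupp.add_apply, smul_eq_mul] at this
        by_contra hc
        push_neg at hc
        have : p ^ e * (n i + 1) ≤ p ^ e * n i + v i := le_trans (Nat.mul_le_mul_left _ hc) this
        rw [Nat.mul_add, Nat.mul_one] at this
        have hvi := hv i
        omega
      · intro h i
        simp only [Finsupp.smul_apply, Finsupp.add_apply, smul_eq_mul]
        exact le_trans (Nat.mul_le_mul_left _ (h i)) (Nat.le_add_right _ _)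
    have hsub : s ≤ n → p ^ e • n + v - p ^ e • s = p ^ e • (n - s) + v := by
      intro h
      ext i
      have := h i
      simp only [Finsupp.tsub_apply, Finsupp.add_apply, Finsupp.smul_apply, smul_eq_mul]
      have h2 : p ^ e * s i ≤ p ^ e * n i := Nat.mul_le_mul_left _ this
      rw [Nat.mul_sub]
      omega
    by_cases h : s ≤ n
    · rw [if_pos h, if_pos (hle.mpr h), hsub h, map_mul, psinv_pow']
    · rw [if_neg h, if_neg (fun hc => h (hle.mp hc)), map_zero]
  | add g1 g2 hg1 hg2 =>
    rw [add_pow_char_pow, add_mul, comp_add, hg1, hg2, add_mul]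


lemma comp_sum {α : Type*} (v : Fin m →₀ ℕ) (s : Finset α) (g : α → MvPolynomial (Fin m) K) :
    comp p e v (∑ a ∈ s, g a) = ∑ a ∈ s, comp p e v (g a) := by
  classical
  induction s using Finset.induction_on with
  | empty => simp [comp_zero]
  | insert _ _ hx ih => rw [Finset.sum_insert hx, Finset.sum_insert hx, comp_add, ih]

/-- residue embedding -/
noncomputable def resf (p e : ℕ) {m : ℕ} (w : Fin m → Fin (p ^ e)) : Fin m →₀ ℕ :=
  Finsupp.equivFunOnFinite.symm fun i => (w i : ℕ)

@[simp] lemma resf_apply (w : Fin m → Fin (p ^ e)) (i : Fin m) : resf p e w i = w i := rfl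

lemma decomposition (f : MvPolynomial (Fin m) K) :
    f = ∑ w : Fin m → Fin (p ^ e),
      (comp p e (resf p e w) f) ^ p ^ e * monomial (resf p e w) 1 := by
  classical
  have hq : 0 < p ^ e := pow_pos (Fact.out (p := p.Prime)).pos e
  ext u
  rw [coeff_sum]
  have hw0lt : ∀ i, u i % p ^ e < p ^ e := fun i => Nat.mod_lt _ hq
  set w₀ : Fin m → Fin (p ^ e) := fun i => ⟨u i % p ^ e, hw0lt i⟩ with hw₀
  rw [Finset.sum_eq_single w₀]
  · have hle : resf p e w₀ ≤ u := by
      rw [Finsupp.le_def]; intro i; exact Nat.mod_le _ _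
    have hsub : u - resf p e w₀ = p ^ e • divq p e u := by
      ext i
      simp only [Finsupp.tsub_apply, Finsupp.smul_apply, resf_apply, divq_apply, smul_eq_mul]
      have hdm := Nat.div_add_mod (u i) (p ^ e)
      have hvv : (w₀ i : ℕ) = u i % p ^ e := rfl
      omega
    rw [coeff_mul_monomial', if_pos hle, hsub, coeff_pow_q, if_pos]
    · have hdd : divq p e (p ^ e • divq p e u) = divq p e u := by
        ext i
        simp only [divq_apply, Finsupp.smul_apply, smul_eq_mul]
        exact Nat.mul_div_cancel_left _ hq
      rw [hdd, coeff_comp _ (fun i => (w₀ i).isLt)]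
      have huu : p ^ e • divq p e u + resf p e w₀ = u := by
        ext i
        simp only [Finsupp.add_apply, Finsupp.smul_apply, divq_apply, resf_apply, smul_eq_mul]
        have hvv : (w₀ i : ℕ) = u i % p ^ e := rfl
        have := Nat.div_add_mod (u i) (p ^ e)
        omega
      rw [huu, psinv_pow, mul_one]
    · ext i
      simp only [modq_apply, Finsupp.smul_apply, smul_eq_mul, Finsupp.coe_zero, Pi.zero_apply]
      exact Nat.mul_mod_right _ _
  · intro w _ hne
    by_cases hle : resf p e w ≤ u
    · rw [coeff_mul_monomial', if_pos hle, coeff_pow_q, if_neg, zero_mul]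
      obtain ⟨i, hi⟩ := Function.ne_iff.mp hne
      intro hmod
      apply hi
      have hmi := congrArg (fun z => z i) hmod
      simp only [modq_apply, Finsupp.tsub_apply, resf_apply, Finsupp.coe_zero,
        Pi.zero_apply] at hmi
      have hleI : (w i : ℕ) ≤ u i := hle i
      obtain ⟨k, hk⟩ := Nat.dvd_of_mod_eq_zero hmi
      have hui : u i = p ^ e * k + (w i : ℕ) := by omega
      have : u i % p ^ e = (w i : ℕ) := by
        rw [hui, Nat.mul_add_mod, Nat.mod_eq_of_lt (w i).isLt]
      exact Fin.ext (by simp [hw₀, this])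
    · rw [coeff_mul_monomial', if_neg hle]
  · intro h
    exact absurd (Finset.mem_univ _) h


lemma comp_mem {J : Ideal (MvPolynomial (Fin m) K)} (v : Fin m →₀ ℕ) (hv : ∀ i, v i < p ^ e) {x : MvPolynomial (Fin m) K}
    (hx : x ∈ Ideal.span ((· ^ p ^ e) '' (J : Set (MvPolynomial (Fin m) K)))) :
    comp p e v x ∈ J := by
  classical
  obtain ⟨c, hsupp, rfl⟩ := Submodule.mem_span_set.mp hx
  rw [Finsupp.sum, comp_sum]
  refine Ideal.sum_mem _ fun y hy => ?_
  obtain ⟨j, hj, rfl⟩ := hsupp hy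
  rw [smul_eq_mul, mul_comm, comp_pow_mul _ hv]
  exact Ideal.mul_mem_right _ _ hj

end

/-- Frobenius powers commute with intersections of ideals in a polynomial ring over a
finite field of characteristic `p`. -/
theorem frobeniusPower_inf
    (p : ℕ) (hp : p.Prime) (K : Type*) [Field K] [Fintype K] [CharP K p]
    (m : ℕ) (A B : Ideal (MvPolynomial (Fin m) K)) (e : ℕ) :
    frobeniusPower (A ⊓ B) (p ^ e) = frobeniusPower A (p ^ e) ⊓ frobeniusPower B (p ^ e) := by
  haveI := Fact.mk hp
  haveI : ExpChar K p := ExpChar.prime hp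
  refine le_antisymm (le_inf ?_ ?_) ?_
  · exact Ideal.span_mono (Set.image_mono (by exact_mod_cast inf_le_left))
  · exact Ideal.span_mono (Set.image_mono (by exact_mod_cast inf_le_right))
  · intro x hx
    obtain ⟨hA, hB⟩ := Submodule.mem_inf.mp hx
    rw [decomposition (p := p) (e := e) x]
    refine Ideal.sum_mem _ fun w _ => ?_
    refine Ideal.mul_mem_right _ _ (Ideal.subset_span ?_)
    exact ⟨comp p e (resf p e w) x, Submodule.mem_inf.mpr ⟨comp_mem _ (fun i => (w i).isLt) hA, comp_mem _ (fun i => (w i).isLt) hB⟩, rfl⟩
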